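/- Let X be a finite-dimensional Noetherian topological space that is biequidimensional. Then the dimension formula holds: for every irreducible closed subset Y of X, dim(X) = dim(Y) + codim(Y, X). -/

import Mathlib

open Order TopologicalSpace

/-- A maximal chain of irreducible closed subsets. -/
def IsMaximalChain {α : Type*} [PartialOrder α] (p : LTSeries α) : Prop :=
  IsMin p.head ∧ IsMax p.last ∧ ∀ i : Fin p.length, p.toFun i.castSucc ⋖ p.toFun i.succ

section Aux

variable {α : Type*}

lemma aux_krullDim_Iic [Preorder α] (a : α) :
    Order.krullDim (Set.Iic a) = (Order.height a : WithBot ℕ∞) := by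
  have : Nonempty (Set.Iic a) := ⟨⟨a, le_refl a⟩⟩
  rw [Order.krullDim_eq_iSup_length, WithBot.coe_inj]
  apply le_antisymm
  · refine iSup_le fun p => ?_
    have := Order.length_le_height (x := a)
      (p := p.map Subtype.val (Subtype.strictMono_coe _))
      (by rw [LTSeries.last_map]; exact (p.last).2)
    simpa using this
  · apply Order.height_le
    intro p hlast
    have hmem : ∀ i, p i ≤ a := fun i => by
      rw [← hlast]; exact p.monotone (Fin.le_last i)
    let q : LTSeries (Set.Iic a) :=
      ⟨p.length, fun i => ⟨p i, hmem i⟩, fun i => (Subtype.mk_lt_mk.mpr (p.step i) :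
        (⟨p i.castSucc, hmem _⟩ : Set.Iic a) < ⟨p i.succ, hmem _⟩)⟩
    exact le_iSup_of_le q le_rfl

lemma aux_krullDim_Ici [Preorder α] (a : α) :
    Order.krullDim (Set.Ici a) = (Order.coheight a : WithBot ℕ∞) := by
  have : Nonempty (Set.Ici a) := ⟨⟨a, le_refl a⟩⟩
  rw [Order.krullDim_eq_iSup_length, WithBot.coe_inj]
  apply le_antisymm
  · refine iSup_le fun p => ?_
    have := Order.length_le_coheight (x := a)
      (p := p.map Subtype.val (Subtype.strictMono_coe _))
      (by rw [LTSeries.head_map]; exact (p.head).2)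
    simpa using this
  · apply Order.coheight_le
    intro p hhead
    have hmem : ∀ i, a ≤ p i := fun i => by
      rw [← hhead]; exact p.monotone (Fin.zero_le i)
    let q : LTSeries (Set.Ici a) :=
      ⟨p.length, fun i => ⟨p i, hmem i⟩, fun i => (Subtype.mk_lt_mk.mpr (p.step i) :
        (⟨p i.castSucc, hmem _⟩ : Set.Ici a) < ⟨p i.succ, hmem _⟩)⟩
    exact le_iSup_of_le q le_rfl

lemma aux_mem_cons {r : SetRel α α} (p : RelSeries r) (z : α) (h : (z, p.head) ∈ r) {x : α}
    (hx : x ∈ p) : x ∈ p.cons z h := by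
  obtain ⟨i, rfl⟩ := hx
  exact ⟨_, RelSeries.append_apply_right (RelSeries.singleton r z) p h i⟩

lemma aux_mem_insertNth {r : SetRel α α} (p : RelSeries r) (i : Fin p.length) (z : α)
    (h1 : (p i.castSucc, z) ∈ r) (h2 : (z, p i.succ) ∈ r) {x : α}
    (hx : x ∈ p) : x ∈ p.insertNth i z h1 h2 := by
  obtain ⟨m, rfl⟩ := hx
  refine ⟨(Fin.castSucc i.succ).succAbove m, ?_⟩
  have h : (p.insertNth i z h1 h2).toFun = (Fin.castSucc i.succ).insertNth z p.toFun := rfl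
  rw [h]
  exact Fin.insertNth_apply_succAbove _ _ _ _

lemma aux_exists_max [Preorder α] (P : LTSeries α → Prop) (hne : ∃ p, P p)
    (N : ℕ) (hb : ∀ p, P p → p.length ≤ N) :
    ∃ q, P q ∧ ∀ p, P p → p.length ≤ q.length := by
  set S : Set ℕ := {n | ∃ p, P p ∧ p.length = n} with hS
  obtain ⟨p0, hp0⟩ := hne
  have hSne : S.Nonempty := ⟨p0.length, p0, hp0, rfl⟩
  have hSb : BddAbove S := ⟨N, fun n ⟨p, hp, hl⟩ => hl ▸ hb p hp⟩
  obtain ⟨q, hq, hl⟩ := Nat.sSup_mem hSne hSb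
  exact ⟨q, hq, fun p hp => hl ▸ le_csSup hSb ⟨p, hp, rfl⟩⟩

lemma aux_isMaximalChain [PartialOrder α] (P : LTSeries α → Prop)
    (hcons : ∀ (p : LTSeries α) (z : α) (h : z < p.head), P p → P (p.cons z h))
    (hsnoc : ∀ (p : LTSeries α) (z : α) (h : p.last < z), P p → P (p.snoc z h))
    (hins : ∀ (p : LTSeries α) (i : Fin p.length) (z : α) (h1 : p i.castSucc < z)
      (h2 : z < p i.succ), P p → P (p.insertNth i z h1 h2))
    (q : LTSeries α) (hq : P q) (hmax : ∀ p : LTSeries α, P p → p.length ≤ q.length) :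
    IsMaximalChain q := by
  refine ⟨?_, ?_, fun i => ?_⟩
  · by_contra h
    obtain ⟨z, hz⟩ := not_isMin_iff.mp h
    have h' := hmax _ (hcons q z hz hq)
    simp [RelSeries.cons_length] at h'
  · by_contra h
    obtain ⟨z, hz⟩ := not_isMax_iff.mp h
    have h' := hmax _ (hsnoc q z hz hq)
    simp [RelSeries.snoc_length] at h'
  · by_contra h
    obtain ⟨z, h1, h2⟩ := (not_covBy_iff (q.step i)).mp h
    have h' := hmax _ (hins q i z h1 h2 hq)
    simp [RelSeries.insertNth_length] at h'

end Aux

/-- Let `X` be a finite-dimensional Noetherian topological space that is biequidimensional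
(all maximal chains of irreducible closed subsets have the same length).  Then the dimension
formula holds: for every irreducible closed subset `Y` of `X`,
`dim X = dim Y + codim (Y, X)`, where `dim Y` is the Krull dimension of the poset of
irreducible closed subsets contained in `Y` and `codim (Y, X)` that of those containing `Y`. -/
theorem stmt_13 (X : Type*) [TopologicalSpace X] [NoetherianSpace X]
    (hfd : topologicalKrullDim X < ⊤)
    (hbieq : ∀ p q : LTSeries (IrreducibleCloseds X),
      IsMaximalChain p → IsMaximalChain q → p.length = q.length) :
    ∀ Y : IrreducibleCloseds X,
      topologicalKrullDim X
        = Order.krullDim (Set.Iic Y) + Order.krullDim (Set.Ici Y) := by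
  intro Y
  have hne : Nonempty (IrreducibleCloseds X) := ⟨Y⟩
  rw [aux_krullDim_Iic, aux_krullDim_Ici]
  have hdim : topologicalKrullDim X = Order.krullDim (IrreducibleCloseds X) := rfl
  rw [hdim] at hfd ⊢
  -- height and coheight of Y are finite naturals
  have hhY : Order.height Y < (⊤ : ℕ∞) := by
    have := Order.height_le_krullDim Y
    rw [← WithBot.coe_lt_coe]
    exact lt_of_le_of_lt this hfd
  have hcY : Order.coheight Y < (⊤ : ℕ∞) := by
    have := Order.coheight_le_krullDim Y
    rw [← WithBot.coe_lt_coe]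
    exact lt_of_le_of_lt this hfd
  obtain ⟨a, ha⟩ : ∃ a : ℕ, Order.height Y = a := ⟨(Order.height Y).toNat,
    (ENat.coe_toNat hhY.ne).symm⟩
  obtain ⟨b, hb⟩ : ∃ b : ℕ, Order.coheight Y = b := ⟨(Order.coheight Y).toNat,
    (ENat.coe_toNat hcY.ne).symm⟩
  rw [ha, hb]
  -- global bound on chain lengths
  obtain ⟨N, hN⟩ : ∃ N : ℕ, Order.krullDim (IrreducibleCloseds X) = (N : WithBot ℕ∞) := by
    have h0 : Order.krullDim (IrreducibleCloseds X) ≠ ⊥ := by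
      intro h
      have := Order.krullDim_nonneg (α := IrreducibleCloseds X)
      rw [h] at this
      simp at this
    obtain ⟨d, hd⟩ := WithBot.ne_bot_iff_exists.mp h0
    have hdlt : d ≠ ⊤ := by
      intro h
      rw [← hd, h] at hfd
      simp at hfd
    refine ⟨d.toNat, ?_⟩
    rw [← hd]
    exact_mod_cast (ENat.coe_toNat hdlt).symm
  have hbound : ∀ p : LTSeries (IrreducibleCloseds X), p.length ≤ N := fun p => by
    have := LTSeries.length_le_krullDim p
    rw [hN] at this
    exact_mod_cast this
  -- chains realizing height and coheight
  obtain ⟨p1, hp1last, hp1len⟩ := Order.exists_series_of_height_eq_coe Y ha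
  obtain ⟨p2, hp2head, hp2len⟩ := Order.exists_series_of_coheight_eq_coe Y hb
  have hconn : p1.last = p2.head := by rw [hp1last, hp2head]
  -- maximal chain through Y
  obtain ⟨q1, hq1Y, hq1max⟩ := aux_exists_max (fun p => Y ∈ p) ⟨RelSeries.singleton _ Y,
    RelSeries.last_mem _⟩ N (fun p _ => hbound p)
  have hq1 : IsMaximalChain q1 := by
    apply aux_isMaximalChain (fun p => Y ∈ p) ?_ ?_ ?_ _ hq1Y hq1max
    · exact fun p z h hp => aux_mem_cons p z h hp
    · exact fun p z h hp => RelSeries.mem_snoc.mpr (Or.inl hp)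
    · exact fun p i z h1 h2 hp => aux_mem_insertNth p i z h1 h2 hp
  -- maximal chain overall
  obtain ⟨q2, -, hq2max⟩ := aux_exists_max (fun _ => True) ⟨RelSeries.singleton _ Y, trivial⟩
    N (fun p _ => hbound p)
  have hq2 : IsMaximalChain q2 := by
    apply aux_isMaximalChain (fun _ => True) ?_ ?_ ?_ _ trivial (fun p _ => hq2max p trivial)
    all_goals intros; trivial
  have hlen12 : q1.length = q2.length := hbieq q1 q2 hq1 hq2
  -- q1.length ≤ a + b
  obtain ⟨j, hj⟩ := hq1Y
  have hja : (j : ℕ) ≤ a := by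
    have := Order.index_le_height q1 j
    rw [hj, ha] at this
    exact_mod_cast this
  have hjb : q1.length - (j : ℕ) ≤ b := by
    have := Order.rev_index_le_coheight q1 j
    rw [hj, hb] at this
    have h2 : ((j.rev : ℕ) : ℕ∞) ≤ (b : ℕ∞) := this
    have h3 : (j.rev : ℕ) ≤ b := by exact_mod_cast h2
    have h4 : (j.rev : ℕ) = q1.length - (j : ℕ) := by
      simp [Fin.rev]
    omega
  have hjle : (j : ℕ) ≤ q1.length := by omega
  have hq1le : q1.length ≤ a + b := by omega
  -- a + b ≤ q2.length
  have hab_le : a + b ≤ q2.length := by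
    have := hq2max (p1.smash p2 hconn) trivial
    rw [RelSeries.smash_length, hp1len, hp2len] at this
    exact this
  have hq2len : q2.length = a + b := by omega
  -- krullDim X = q2.length
  have hkd : Order.krullDim (IrreducibleCloseds X) = ((a + b : ℕ) : WithBot ℕ∞) := by
    apply le_antisymm
    · refine iSup_le fun p => ?_
      have h1 : p.length ≤ a + b := by
        have := hq2max p trivial
        omega
      exact_mod_cast h1
    · have := LTSeries.length_le_krullDim (p1.smash p2 hconn)
      rwa [RelSeries.smash_length, hp1len, hp2len] at this
  rw [hkd]
  push_cast
  rfl
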